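/- Let p and q be relatively prime integers with p ≥ 1, q ≥ 1, and p/q ∉ {1, 2, 3, 4}. Let △_m be the Farey triangle containing p/q that is closest in the Farey tree Σ to △^{(0)}, let △_V be the unique triangle adjacent to △_m in Σ that does not contain p/q, and set z = min{⌊p/q⌋, 3}. Then d(△_V, △^{(z)}) = d(△_V, △^{(0)}) − d(△^{(z)}, △^{(0)}) = d(△_V, △^{(0)}) − z. -/

import Mathlib

/-- A Farey vertex is an element of `ℚ ∪ {∞}`; `none` represents `∞`. -/
abbrev FareyVertex := Option ℚ

/-- The numerator of the reduced form `a/b` (with `b ≥ 0`) of a Farey vertex; `∞ = 1/0`. -/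
def fnum : FareyVertex → ℤ
  | none => 1
  | some r => r.num

/-- The denominator of the reduced form `a/b` (with `b ≥ 0`) of a Farey vertex; `∞ = 1/0`. -/
def fden : FareyVertex → ℤ
  | none => 0
  | some r => (r.den : ℤ)

/-- Two Farey vertices with reduced forms `a/b` and `c/d` are Farey-neighbors if `|ad - bc| = 1`. -/
def FareyNeighbor (x y : FareyVertex) : Prop :=
  |fnum x * fden y - fden x * fnum y| = 1

/-- A Farey triangle: a set of three distinct pairwise Farey-neighbor Farey vertices. -/
@[ext]
structure FareyTriangle where
  verts : Finset FareyVertex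
  card_eq : verts.card = 3
  neighbors : ∀ x ∈ verts, ∀ y ∈ verts, x ≠ y → FareyNeighbor x y

/-- The Farey tree `Σ`: vertices are the Farey triangles, two triangles being adjacent
if and only if their intersection has exactly two elements. -/
def fareyTree : SimpleGraph FareyTriangle where
  Adj T T' := (T.verts ∩ T'.verts).card = 2
  symm := by
    constructor
    intro T T' h
    rwa [Finset.inter_comm]
  loopless := by
    constructor
    intro T h
    rw [Finset.inter_self, T.card_eq] at h
    omega

/-- The Farey vertex represented by the (not necessarily reduced) fraction `a/b`,
with the conventions `a/b = (-a)/(-b)` and `x/0 = ∞`. -/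
def mkFarey (a b : ℤ) : FareyVertex :=
  if b = 0 then none else some ((a : ℚ) / (b : ℚ))

lemma neighbor_int_succ (i : ℤ) :
    FareyNeighbor (some (i : ℚ)) (some ((i + 1 : ℤ) : ℚ)) := by
  have hn : (((i + 1 : ℤ) : ℚ)).num = i + 1 := Rat.num_intCast _
  have hd : (((i + 1 : ℤ) : ℚ)).den = 1 := Rat.den_intCast _
  simp only [FareyNeighbor, fnum, fden, hn, hd, Rat.num_intCast, Rat.den_intCast]
  simp

lemma neighbor_int_inf (i : ℤ) : FareyNeighbor (some (i : ℚ)) none := by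
  simp [FareyNeighbor, fnum, fden]

lemma neighbor_symm {x y : FareyVertex} (h : FareyNeighbor x y) : FareyNeighbor y x := by
  unfold FareyNeighbor at h ⊢
  rw [← abs_neg]
  convert h using 2
  ring

/-- `△⁽ⁱ⁾`: the Farey triangle with vertices `i`, `i+1` and `∞`. -/
def stdTriangle (i : ℤ) : FareyTriangle where
  verts := {some (i : ℚ), some ((i + 1 : ℤ) : ℚ), none}
  card_eq := by
    have h1 : (some (i : ℚ) : FareyVertex) ≠ some ((i + 1 : ℤ) : ℚ) := by
      simp only [ne_eq, Option.some.injEq]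
      intro h
      have : (i : ℚ) = (i : ℚ) + 1 := by push_cast at h ⊢; linarith
      linarith
    simp [Finset.card_insert_of_notMem, h1]
  neighbors := by
    intro x hx y hy hxy
    have h1 := neighbor_int_succ i
    have h2 := neighbor_int_inf i
    have h3 := neighbor_int_inf (i + 1)
    simp only [Finset.mem_insert, Finset.mem_singleton] at hx hy
    rcases hx with rfl | rfl | rfl <;> rcases hy with rfl | rfl | rfl <;>
      first
        | exact absurd rfl hxy
        | assumption
        | exact neighbor_symm h1
        | exact neighbor_symm h2
        | exact neighbor_symm h3

/-- `S p q` is the sum of the partial quotients in the expansion of `p/q`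
as a regular continued fraction (for coprime `p ≥ 0`, `q ≥ 1`), with `S 0 1 = 0`. -/
def S (p q : ℕ) : ℕ :=
  if h : q = 0 then 0
  else p / q + S q (p % q)
termination_by q
decreasing_by exact Nat.mod_lt p (Nat.pos_of_ne_zero h)


section Aux

lemma fden_nonneg (x : FareyVertex) : 0 ≤ fden x := by
  cases x <;> simp [fden]

lemma fden_some_pos (r : ℚ) : 0 < fden (some r) := by
  simp [fden]; exact r.pos

lemma neighbor_ne {x y : FareyVertex} (h : FareyNeighbor x y) : x ≠ y := by
  rintro rfl
  unfold FareyNeighbor at h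
  rw [mul_comm] at h
  simp at h

/-- A Farey vertex is determined by its numerator and denominator. -/
lemma vert_ext {x y : FareyVertex} (hn : fnum x = fnum y) (hd : fden x = fden y) : x = y := by
  cases x with
  | none =>
    cases y with
    | none => rfl
    | some s => have := fden_some_pos s; simp [fden] at hd this; omega
  | some r =>
    cases y with
    | none =>
      simp only [fden] at hd
      have : r.den = 0 := by exact_mod_cast hd
      exact absurd this r.den_nz
    | some s =>
      simp only [fnum, fden, Nat.cast_inj] at hn hd
      exact congrArg some (Rat.ext hn hd)

/-- A finite neighbor of `∞` is an integer. -/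
lemma eq_int_of_neighbor_none {r : ℚ} (h : FareyNeighbor (some r) none) :
    r = (r.num : ℚ) ∧ r.den = 1 := by
  unfold FareyNeighbor at h
  simp only [fnum, fden, mul_zero, mul_one, zero_sub, abs_neg, Int.abs_natCast,
    Nat.cast_eq_one, zero_mul, mul_zero, sub_zero] at h
  have hd : r.den = 1 := by exact_mod_cast h
  constructor
  · conv_lhs => rw [← Rat.num_div_den r]
    rw [hd]; simp
  · exact hd

lemma neighbor_some_none {r : ℚ} (h : FareyNeighbor (some r) none) :
    ∃ m : ℤ, r = (m : ℚ) := ⟨r.num, (eq_int_of_neighbor_none h).1⟩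

/-- Neighboring integers are consecutive. -/
lemma neighbor_int_int {m n : ℤ} (h : FareyNeighbor (some (m : ℚ)) (some (n : ℚ))) :
    m = n + 1 ∨ n = m + 1 := by
  unfold FareyNeighbor at h
  simp only [fnum, fden, Rat.num_intCast, Rat.den_intCast, Nat.cast_one, mul_one, one_mul] at h
  rcases abs_eq (by norm_num : (0:ℤ) ≤ 1) |>.mp h with h' | h'
  · left; omega
  · right; omega

lemma neighbor_none_of_fden_one {x : FareyVertex} (h : fden x = 1) : FareyNeighbor x none := by
  unfold FareyNeighbor
  show |fnum x * 0 - fden x * 1| = 1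
  rw [h]
  norm_num

lemma stdTriangle_verts (i : ℤ) :
    (stdTriangle i).verts = {some ((i : ℤ) : ℚ), some ((i + 1 : ℤ) : ℚ), none} := rfl

lemma mem_stdTriangle_iff {i : ℤ} {x : FareyVertex} :
    x ∈ (stdTriangle i).verts ↔ x = some ((i : ℤ) : ℚ) ∨ x = some ((i + 1 : ℤ) : ℚ) ∨ x = none := by
  rw [stdTriangle_verts]
  simp

/-- The intersection of consecutive standard triangles. -/
lemma adj_std_succ (i : ℤ) : fareyTree.Adj (stdTriangle (i + 1)) (stdTriangle i) := by
  show ((stdTriangle (i+1)).verts ∩ (stdTriangle i).verts).card = 2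
  have : (stdTriangle (i+1)).verts ∩ (stdTriangle i).verts = {some ((i + 1 : ℤ) : ℚ), none} := by
    ext a
    simp only [Finset.mem_inter, mem_stdTriangle_iff, Finset.mem_insert, Finset.mem_singleton]
    constructor
    · rintro ⟨h1 | h1 | h1, h2 | h2 | h2⟩ <;> subst h1 <;>
        first
          | (left; rfl)
          | (right; rfl)
          | (exfalso; simp only [Option.some.injEq, Int.cast_inj, reduceCtorEq] at h2; omega)
          | (exfalso; simp only [Option.some.injEq, Int.cast_inj, reduceCtorEq] at h2)
    · rintro (rfl | rfl)
      · exact ⟨Or.inl rfl, Or.inr (Or.inl rfl)⟩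
      · exact ⟨Or.inr (Or.inr rfl), Or.inr (Or.inr rfl)⟩
  rw [this]
  rw [Finset.card_insert_of_notMem (by simp), Finset.card_singleton]

lemma reach_std (j : ℤ) : fareyTree.Reachable (stdTriangle j) (stdTriangle 0) := by
  induction j using Int.induction_on with
  | zero => exact SimpleGraph.Reachable.refl _
  | succ n ih => exact ((adj_std_succ n).reachable).trans ih
  | pred n ih => exact ((adj_std_succ (-n - 1)).symm.reachable).trans (by simpa using ih)

end Aux
section Aux2

/-- Comparison of a rational with an integer in terms of num/den. -/
lemma int_le_rat_iff (i : ℤ) (r : ℚ) : (i : ℚ) ≤ r ↔ i * (r.den : ℤ) ≤ r.num := by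
  conv_lhs => rw [← Rat.num_div_den r]
  rw [le_div_iff₀ (by exact_mod_cast r.pos)]
  exact_mod_cast Iff.rfl

lemma rat_lt_int_iff (i : ℤ) (r : ℚ) : r < (i : ℚ) ↔ r.num < i * (r.den : ℤ) := by
  rw [← not_le, ← not_le, int_le_rat_iff]

lemma int_lt_rat_iff (i : ℤ) (r : ℚ) : (i : ℚ) < r ↔ i * (r.den : ℤ) < r.num := by
  constructor
  · intro h
    rcases lt_or_eq_of_le ((int_le_rat_iff i r).mp h.le) with h' | h'
    · exact h'
    · exfalso
      have : r = (i : ℚ) := by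
        conv_lhs => rw [← Rat.num_div_den r, ← h']
        push_cast
        field_simp
      rw [this] at h
      exact lt_irrefl _ h
  · intro h
    rcases lt_or_eq_of_le ((int_le_rat_iff i r).mpr h.le) with h' | h'
    · exact h'
    · exfalso
      rw [← h'] at h
      simp only [Rat.num_intCast, Rat.den_intCast] at h
      omega

/-- No Farey edge strictly straddles an integer. -/
lemma straddle (i : ℤ) {r s : ℚ} (h : FareyNeighbor (some r) (some s))
    (hr : r < (i : ℚ)) (hs : (i : ℚ) < s) : False := by
  unfold FareyNeighbor at h
  simp only [fnum, fden] at h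
  rw [rat_lt_int_iff] at hr
  rw [int_lt_rat_iff] at hs
  have hb : 0 < (r.den : ℤ) := by exact_mod_cast r.pos
  have hd : 0 < (s.den : ℤ) := by exact_mod_cast s.pos
  have h1 : r.num * s.den - r.den * s.num ≤ -(r.den : ℤ) - s.den := by
    have e1 : r.num * (s.den : ℤ) ≤ (i * r.den - 1) * s.den :=
      mul_le_mul_of_nonneg_right (by omega) (by omega)
    have e2 : (r.den : ℤ) * (i * s.den + 1) ≤ (r.den : ℤ) * s.num :=
      mul_le_mul_of_nonneg_left (by omega) (by omega)
    nlinarith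
  have := abs_eq (by norm_num : (0:ℤ) ≤ 1) |>.mp h
  omega

/-- The four possible completions of a Farey edge. -/
lemma comp {x y v : FareyVertex} (hxy : FareyNeighbor x y) (hxv : FareyNeighbor x v)
    (hyv : FareyNeighbor y v) :
    (fnum v = fnum x + fnum y ∧ fden v = fden x + fden y) ∨
    (fnum v = -(fnum x + fnum y) ∧ fden v = -(fden x + fden y)) ∨
    (fnum v = fnum x - fnum y ∧ fden v = fden x - fden y) ∨
    (fnum v = fnum y - fnum x ∧ fden v = fden y - fden x) := by
  unfold FareyNeighbor at hxy hxv hyv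
  have h01 : (0:ℤ) ≤ 1 := by norm_num
  rcases (abs_eq h01).mp hxy with hσ | hσ <;>
    rcases (abs_eq h01).mp hxv with hε | hε <;>
      rcases (abs_eq h01).mp hyv with hδ | hδ
  · exact Or.inr (Or.inr (Or.inr ⟨by linear_combination (fnum y*hε - fnum x*hδ - fnum v*hσ),
      by linear_combination (fden y*hε - fden x*hδ - fden v*hσ)⟩))
  · exact Or.inl ⟨by linear_combination (fnum y*hε - fnum x*hδ - fnum v*hσ),
      by linear_combination (fden y*hε - fden x*hδ - fden v*hσ)⟩
  · exact Or.inr (Or.inl ⟨by linear_combination (fnum y*hε - fnum x*hδ - fnum v*hσ),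
      by linear_combination (fden y*hε - fden x*hδ - fden v*hσ)⟩)
  · exact Or.inr (Or.inr (Or.inl ⟨by linear_combination (fnum y*hε - fnum x*hδ - fnum v*hσ),
      by linear_combination (fden y*hε - fden x*hδ - fden v*hσ)⟩))
  · exact Or.inr (Or.inr (Or.inl ⟨by linear_combination (-(fnum y*hε - fnum x*hδ - fnum v*hσ)),
      by linear_combination (-(fden y*hε - fden x*hδ - fden v*hσ))⟩))
  · exact Or.inr (Or.inl ⟨by linear_combination (-(fnum y*hε - fnum x*hδ - fnum v*hσ)),
      by linear_combination (-(fden y*hε - fden x*hδ - fden v*hσ))⟩)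
  · exact Or.inl ⟨by linear_combination (-(fnum y*hε - fnum x*hδ - fnum v*hσ)),
      by linear_combination (-(fden y*hε - fden x*hδ - fden v*hσ))⟩
  · exact Or.inr (Or.inr (Or.inr ⟨by linear_combination (-(fnum y*hε - fnum x*hδ - fnum v*hσ)),
      by linear_combination (-(fden y*hε - fden x*hδ - fden v*hσ))⟩))

end Aux2
section Aux3

/-- Structure of an adjacency in the Farey tree. -/
lemma adj_struct {T T' : FareyTriangle} (h : fareyTree.Adj T T') :
    ∃ x y t w : FareyVertex, x ≠ y ∧ t ∉ T'.verts ∧ w ∉ T.verts ∧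
      T.verts = {x, y, t} ∧ T'.verts = {x, y, w} := by
  have hc : (T.verts ∩ T'.verts).card = 2 := h
  obtain ⟨x, y, hxy, hS⟩ := Finset.card_eq_two.mp hc
  have hsub : ({x, y} : Finset FareyVertex) ⊆ T.verts := by
    rw [← hS]; exact Finset.inter_subset_left
  have hsub' : ({x, y} : Finset FareyVertex) ⊆ T'.verts := by
    rw [← hS]; exact Finset.inter_subset_right
  have hcard2 : ({x, y} : Finset FareyVertex).card = 2 := by
    rw [Finset.card_insert_of_notMem (by simpa using hxy), Finset.card_singleton]
  -- third vertex of T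
  have h3 : ∃ t ∈ T.verts, t ∉ ({x, y} : Finset FareyVertex) := by
    by_contra hcon
    push_neg at hcon
    have := Finset.card_le_card (fun a ha => hcon a ha)
    rw [T.card_eq, hcard2] at this
    omega
  obtain ⟨t, ht, htS⟩ := h3
  have hT : T.verts = {x, y, t} := by
    apply (Finset.eq_of_subset_of_card_le _ _).symm
    · intro a ha
      simp only [Finset.mem_insert, Finset.mem_singleton] at ha
      rcases ha with rfl | rfl | rfl
      · exact hsub (by simp)
      · exact hsub (by simp)
      · exact ht
    · rw [T.card_eq]
      have : ({x, y, t} : Finset FareyVertex).card = 3 := by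
        rw [Finset.card_insert_of_notMem, Finset.card_insert_of_notMem, Finset.card_singleton]
        · simp only [Finset.mem_singleton]
          intro hc'; apply htS; simp [hc']
        · simp only [Finset.mem_insert, Finset.mem_singleton]
          rintro (rfl | h')
          · exact hxy rfl
          · apply htS; simp [h']
      omega
  have h3' : ∃ w ∈ T'.verts, w ∉ ({x, y} : Finset FareyVertex) := by
    by_contra hcon
    push_neg at hcon
    have := Finset.card_le_card (fun a ha => hcon a ha)
    rw [T'.card_eq, hcard2] at this
    omega
  obtain ⟨w, hw, hwS⟩ := h3'
  have hT' : T'.verts = {x, y, w} := by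
    apply (Finset.eq_of_subset_of_card_le _ _).symm
    · intro a ha
      simp only [Finset.mem_insert, Finset.mem_singleton] at ha
      rcases ha with rfl | rfl | rfl
      · exact hsub' (by simp)
      · exact hsub' (by simp)
      · exact hw
    · rw [T'.card_eq]
      have : ({x, y, w} : Finset FareyVertex).card = 3 := by
        rw [Finset.card_insert_of_notMem, Finset.card_insert_of_notMem, Finset.card_singleton]
        · simp only [Finset.mem_singleton]
          intro hc'; apply hwS; simp [hc']
        · simp only [Finset.mem_insert, Finset.mem_singleton]
          rintro (rfl | h')
          · exact hxy rfl
          · apply hwS; simp [h']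
      omega
  refine ⟨x, y, t, w, hxy, ?_, ?_, hT, hT'⟩
  · intro hmem
    apply htS
    rw [← hS]
    exact Finset.mem_inter.mpr ⟨ht, hmem⟩
  · intro hmem
    apply hwS
    rw [← hS]
    exact Finset.mem_inter.mpr ⟨hmem, hw⟩

end Aux3
section Aux4

/-- Total denominator of a Farey triangle. -/
def msum (T : FareyTriangle) : ℕ := ∑ x ∈ T.verts, (fden x).toNat

lemma triple_card {x y v : FareyVertex} (hxy : x ≠ y) (hxv : x ≠ v) (hyv : y ≠ v) :
    ({x, y, v} : Finset FareyVertex).card = 3 := by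
  rw [Finset.card_insert_of_notMem (by simp [hxy, hxv]),
    Finset.card_insert_of_notMem (by simp [hyv]), Finset.card_singleton]

lemma msum_eq {T : FareyTriangle} {x y v : FareyVertex} (hT : T.verts = {x, y, v})
    (hxy : x ≠ y) (hxv : x ≠ v) (hyv : y ≠ v) :
    msum T = (fden x).toNat + (fden y).toNat + (fden v).toNat := by
  unfold msum
  rw [hT, Finset.sum_insert (by simp [hxy, hxv]), Finset.sum_insert (by simp [hyv]),
    Finset.sum_singleton]
  ring

lemma triple_comm₁ (x y v : FareyVertex) : ({x, y, v} : Finset FareyVertex) = {y, x, v} := by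
  ext z; simp only [Finset.mem_insert, Finset.mem_singleton]; tauto

lemma triple_comm₂ (x y v : FareyVertex) : ({x, y, v} : Finset FareyVertex) = {x, v, y} := by
  ext z; simp only [Finset.mem_insert, Finset.mem_singleton]; tauto

/-- The descent step: replace the max-denominator vertex by the parent vertex. -/
lemma descent (T : FareyTriangle) (x y v : FareyVertex) (hT : T.verts = {x, y, v})
    (hxy : x ≠ y) (hxv : x ≠ v) (hyv : y ≠ v)
    (hfin : none ∉ T.verts)
    (hdyx : fden y ≤ fden x) (hdxv : fden x ≤ fden v) :
    ∃ T' : FareyTriangle, fareyTree.Adj T T' ∧ msum T' < msum T := by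
  have hxm : x ∈ T.verts := by rw [hT]; simp
  have hym : y ∈ T.verts := by rw [hT]; simp
  have hvm : v ∈ T.verts := by rw [hT]; simp
  have hbpos : 0 < fden x := by
    cases x with
    | none => exact absurd hxm hfin
    | some r => exact fden_some_pos r
  have hdpos : 0 < fden y := by
    cases y with
    | none => exact absurd hym hfin
    | some r => exact fden_some_pos r
  have hfpos : 0 < fden v := by
    cases v with
    | none => exact absurd hvm hfin
    | some r => exact fden_some_pos r
  have nxy : FareyNeighbor x y := T.neighbors x hxm y hym hxy
  have nxv : FareyNeighbor x v := T.neighbors x hxm v hvm hxv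
  have nyv : FareyNeighbor y v := T.neighbors y hym v hvm hyv
  -- v is the mediant of x and y
  have hmed : fnum v = fnum x + fnum y ∧ fden v = fden x + fden y := by
    rcases comp nxy nxv nyv with h | h | h | h
    · exact h
    · exfalso; obtain ⟨-, h2⟩ := h; omega
    · exfalso; obtain ⟨-, h2⟩ := h; omega
    · exfalso; obtain ⟨-, h2⟩ := h; omega
  obtain ⟨hmed1, hmed2⟩ := hmed
  set a := fnum x with hadef
  set b := fden x with hbdef
  set c := fnum y with hcdef
  set d := fden y with hddef
  set u : ℤ := a - c with hu
  set ev : ℤ := b - d with hev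
  have hev0 : 0 ≤ ev := by omega
  have hub : |a * ev - b * u| = 1 := by
    have h' : a * ev - b * u = -(a * d - b * c) := by rw [hu, hev]; ring
    rw [h', abs_neg]; exact nxy
  have hud : |c * ev - d * u| = 1 := by
    have h' : c * ev - d * u = -(a * d - b * c) := by rw [hu, hev]; ring
    rw [h', abs_neg]; exact nxy
  have key : ∃ w : FareyVertex, FareyNeighbor x w ∧ FareyNeighbor y w ∧ fden w = ev := by
    rcases eq_or_lt_of_le hev0 with hz | hpos
    · -- ev = 0, w = ∞
      have hb1 : b = 1 := by
        rw [← hz, mul_zero, zero_sub, abs_neg, abs_mul] at hub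
        rcases Int.mul_eq_one_iff_eq_one_or_neg_one.mp hub with ⟨h1, -⟩ | ⟨h1, -⟩
        · rcases (abs_eq (by norm_num : (0:ℤ) ≤ 1)).mp h1 with h' | h' <;> omega
        · have := abs_nonneg b; linarith
      have hd1 : d = 1 := by
        rw [← hz, mul_zero, zero_sub, abs_neg, abs_mul] at hud
        rcases Int.mul_eq_one_iff_eq_one_or_neg_one.mp hud with ⟨h1, -⟩ | ⟨h1, -⟩
        · rcases (abs_eq (by norm_num : (0:ℤ) ≤ 1)).mp h1 with h' | h' <;> omega
        · have := abs_nonneg d; linarith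
      exact ⟨none, neighbor_none_of_fden_one (by rw [← hbdef, hb1]),
        neighbor_none_of_fden_one (by rw [← hddef, hd1]), by simp [fden, ← hz]⟩
    · -- ev > 0
      have hic : IsCoprime u ev := by
        rcases (abs_eq (by norm_num : (0:ℤ) ≤ 1)).mp hud with h' | h'
        · exact ⟨-d, c, by linarith [h']⟩
        · exact ⟨d, -c, by linarith [h']⟩
      have hgcd : Int.gcd u ev = 1 := Int.isCoprime_iff_gcd_eq_one.mp hic
      have hcop : u.natAbs.Coprime ev.toNat := by
        have h' : ev.natAbs = ev.toNat := by omega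
        rwa [Int.gcd, h'] at hgcd
      refine ⟨some (Rat.mk' u ev.toNat (by omega) hcop), ?_, ?_, ?_⟩
      · show |fnum x * fden _ - fden x * fnum _| = 1
        have h1 : fnum (some (Rat.mk' u ev.toNat (by omega) hcop)) = u := rfl
        have h2 : fden (some (Rat.mk' u ev.toNat (by omega) hcop)) = ev := by
          simp only [fden, Rat.mk_eq_divInt]
          show ((ev.toNat : ℕ) : ℤ) = ev
          omega
        rw [h1, h2]
        exact hub
      · show |fnum y * fden _ - fden y * fnum _| = 1
        have h1 : fnum (some (Rat.mk' u ev.toNat (by omega) hcop)) = u := rfl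
        have h2 : fden (some (Rat.mk' u ev.toNat (by omega) hcop)) = ev := by
          simp only [fden, Rat.mk_eq_divInt]
          show ((ev.toNat : ℕ) : ℤ) = ev
          omega
        rw [h1, h2]
        exact hud
      · show fden (some (Rat.mk' u ev.toNat (by omega) hcop)) = ev
        simp only [fden]
        show ((ev.toNat : ℕ) : ℤ) = ev
        omega
  obtain ⟨w, nxw, nyw, hfw⟩ := key
  have hwx : x ≠ w := neighbor_ne nxw
  have hwy : y ≠ w := neighbor_ne nyw
  have hwv : v ≠ w := by
    intro h'
    rw [← h'] at hfw
    omega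
  have hwT : w ∉ T.verts := by
    rw [hT]
    simp only [Finset.mem_insert, Finset.mem_singleton]
    rintro (rfl | rfl | rfl)
    · exact hwx rfl
    · exact hwy rfl
    · exact hwv rfl
  let T' : FareyTriangle :=
    { verts := {x, y, w}
      card_eq := triple_card hxy hwx hwy
      neighbors := by
        intro z hz z' hz' hne
        simp only [Finset.mem_insert, Finset.mem_singleton] at hz hz'
        rcases hz with rfl | rfl | rfl <;> rcases hz' with rfl | rfl | rfl <;>
          first
            | exact absurd rfl hne
            | exact nxy
            | exact nxw
            | exact nyw
            | exact neighbor_symm nxy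
            | exact neighbor_symm nxw
            | exact neighbor_symm nyw }
  refine ⟨T', ?_, ?_⟩
  · show (T.verts ∩ T'.verts).card = 2
    have hint : T.verts ∩ T'.verts = {x, y} := by
      ext z
      show z ∈ T.verts ∩ ({x, y, w} : Finset FareyVertex) ↔ _
      simp only [Finset.mem_inter, Finset.mem_insert, Finset.mem_singleton]
      constructor
      · rintro ⟨hzT, rfl | rfl | rfl⟩
        · exact Or.inl rfl
        · exact Or.inr rfl
        · exact absurd hzT hwT
      · rintro (rfl | rfl)
        · exact ⟨hxm, Or.inl rfl⟩
        · exact ⟨hym, Or.inr (Or.inl rfl)⟩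
    rw [hint, Finset.card_insert_of_notMem (by simpa using hxy), Finset.card_singleton]
  · have hm1 : msum T = (fden x).toNat + (fden y).toNat + (fden v).toNat :=
      msum_eq hT hxy hxv hyv
    have hm2 : msum T' = (fden x).toNat + (fden y).toNat + (fden w).toNat :=
      msum_eq rfl hxy hwx hwy
    rw [hm1, hm2, hfw]
    omega

/-- Triangles containing `∞` are the standard triangles. -/
lemma eq_std_of_none_mem (T : FareyTriangle) (h : none ∈ T.verts) :
    ∃ j : ℤ, T = stdTriangle j := by
  obtain ⟨x, y, v, hxy, hxv, hyv, hT⟩ := Finset.card_eq_three.mp T.card_eq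
  have hre : ∃ y' v' : FareyVertex, y' ≠ v' ∧ y' ≠ none ∧ v' ≠ none ∧
      T.verts = {none, y', v'} := by
    rw [hT] at h
    simp only [Finset.mem_insert, Finset.mem_singleton] at h
    rcases h with rfl | rfl | rfl
    · exact ⟨y, v, hyv, Ne.symm hxy, Ne.symm hxv, hT⟩
    · exact ⟨x, v, hxv, hxy, Ne.symm hyv,
        by rw [hT]; ext z; simp only [Finset.mem_insert, Finset.mem_singleton]; tauto⟩
    · exact ⟨x, y, hxy, hxv, hyv,
        by rw [hT]; ext z; simp only [Finset.mem_insert, Finset.mem_singleton]; tauto⟩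
  obtain ⟨y', v', hyv', hy0, hv0, hT'⟩ := hre
  obtain ⟨r, rfl⟩ : ∃ r : ℚ, y' = some r := Option.ne_none_iff_exists'.mp hy0
  obtain ⟨s, rfl⟩ : ∃ s : ℚ, v' = some s := Option.ne_none_iff_exists'.mp hv0
  have hnm : none ∈ T.verts := h
  have hym : some r ∈ T.verts := by rw [hT']; simp
  have hvm : some s ∈ T.verts := by rw [hT']; simp
  obtain ⟨m, rfl⟩ := neighbor_some_none (T.neighbors _ hym none hnm (by simp))
  obtain ⟨n, rfl⟩ := neighbor_some_none (T.neighbors _ hvm none hnm (by simp))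
  rcases neighbor_int_int (T.neighbors _ hym _ hvm hyv') with h' | h'
  · refine ⟨n, ?_⟩
    apply FareyTriangle.ext
    rw [hT', stdTriangle_verts]
    subst h'
    ext z
    simp only [Finset.mem_insert, Finset.mem_singleton]
    tauto
  · refine ⟨m, ?_⟩
    apply FareyTriangle.ext
    rw [hT', stdTriangle_verts]
    subst h'
    ext z
    simp only [Finset.mem_insert, Finset.mem_singleton]
    tauto

/-- The Farey tree is connected to the base triangle. -/
theorem reach_std0 (T : FareyTriangle) : fareyTree.Reachable T (stdTriangle 0) := by
  suffices H : ∀ n (T : FareyTriangle), msum T ≤ n → fareyTree.Reachable T (stdTriangle 0) from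
    H _ T le_rfl
  intro n
  induction n using Nat.strong_induction_on with
  | _ n ih =>
    intro T hn
    by_cases hinf : none ∈ T.verts
    · obtain ⟨j, rfl⟩ := eq_std_of_none_mem T hinf
      exact reach_std j
    · obtain ⟨x, y, v, hxy, hxv, hyv, hT⟩ := Finset.card_eq_three.mp T.card_eq
      have step : ∃ T' : FareyTriangle, fareyTree.Adj T T' ∧ msum T' < msum T := by
        have perm : ∀ x' y' v' : FareyVertex, T.verts = {x', y', v'} →
            x' ≠ y' → x' ≠ v' → y' ≠ v' →
            fden y' ≤ fden x' → fden x' ≤ fden v' →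
            ∃ T' : FareyTriangle, fareyTree.Adj T T' ∧ msum T' < msum T :=
          fun x' y' v' h1 h2 h3 h4 h5 h6 => descent T x' y' v' h1 h2 h3 h4 hinf h5 h6
        have e1 : ∀ a b c : FareyVertex, T.verts = {a, b, c} → T.verts = {b, a, c} := by
          intro a b c h'
          rw [h']; ext z; simp only [Finset.mem_insert, Finset.mem_singleton]; tauto
        have e2 : ∀ a b c : FareyVertex, T.verts = {a, b, c} → T.verts = {a, c, b} := by
          intro a b c h'
          rw [h']; ext z; simp only [Finset.mem_insert, Finset.mem_singleton]; tauto
        rcases le_total (fden x) (fden y) with h1 | h1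
        · rcases le_total (fden y) (fden v) with h2 | h2
          · exact perm y x v (e1 _ _ _ hT) hxy.symm hyv hxv h1 h2
          · rcases le_total (fden x) (fden v) with h3 | h3
            · exact perm v x y (e1 _ _ _ (e2 _ _ _ hT)) hxv.symm hyv.symm hxy h3 h2
            · exact perm x v y (e2 _ _ _ hT) hxv hxy hyv.symm h3 h1
        · rcases le_total (fden x) (fden v) with h2 | h2
          · exact perm x y v hT hxy hxv hyv h1 h2
          · rcases le_total (fden y) (fden v) with h3 | h3
            · exact perm v y x (e1 _ _ _ (e2 _ _ _ (e1 _ _ _ hT))) hyv.symm hxv.symm hxy.symm h3 h2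
            · exact perm y v x (e2 _ _ _ (e1 _ _ _ hT)) hyv hxy.symm hxv.symm h3 h1
      obtain ⟨T', hadj, hlt⟩ := step
      have hreach := ih (msum T') (by omega) T' le_rfl
      exact hadj.reachable.trans hreach

end Aux4
section Aux5

noncomputable instance : DecidableEq FareyTriangle := Classical.decEq _

set_option maxHeartbeats 1000000 in

/-- A triangle lies (weakly) to the right of the integer `i`. -/
def RightOf (i : ℤ) (T : FareyTriangle) : Prop :=
  ∀ r : ℚ, some r ∈ T.verts → (i : ℚ) ≤ r

lemma rightOf_std (i : ℤ) : RightOf i (stdTriangle i) := by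
  intro r hr
  rw [mem_stdTriangle_iff] at hr
  rcases hr with h | h | h
  · rw [Option.some_inj] at h; rw [h]
  · rw [Option.some_inj] at h; rw [h]; push_cast; linarith
  · exact absurd h (by simp)

lemma std_injective {i j : ℤ} (h : stdTriangle i = stdTriangle j) : i = j := by
  have h1 : some ((i : ℤ) : ℚ) ∈ (stdTriangle j).verts := by
    rw [← h, mem_stdTriangle_iff]; left; rfl
  have h2 : some ((j : ℤ) : ℚ) ∈ (stdTriangle i).verts := by
    rw [h, mem_stdTriangle_iff]; left; rfl
  rw [mem_stdTriangle_iff] at h1 h2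
  have c1 : i = j ∨ i = j + 1 := by
    rcases h1 with h' | h' | h'
    · left; rw [Option.some_inj] at h'; exact_mod_cast h'
    · right; rw [Option.some_inj] at h'; exact_mod_cast h'
    · exact absurd h' (by simp)
  have c2 : j = i ∨ j = i + 1 := by
    rcases h2 with h' | h' | h'
    · left; rw [Option.some_inj] at h'; exact_mod_cast h'
    · right; rw [Option.some_inj] at h'; exact_mod_cast h'
    · exact absurd h' (by simp)
  omega


end Aux5
section Aux5b

set_option maxHeartbeats 2000000 in
/-- Crossing lemma: an adjacency leaving the right side of `i` must be the edge
`△⁽ⁱ⁾ — △⁽ⁱ⁻¹⁾`. -/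
lemma adj_cross {i : ℤ} {T T' : FareyTriangle} (hadj : fareyTree.Adj T T')
    (hR : RightOf i T) (hR' : ¬ RightOf i T') :
    T = stdTriangle i ∧ T' = stdTriangle (i - 1) := by
  obtain ⟨x, y, t, w, hxy, htT', hwT, hT, hT'⟩ := adj_struct hadj
  -- the offending vertex of T' is the new vertex w
  obtain ⟨r, hrm, hrlt⟩ : ∃ r : ℚ, some r ∈ T'.verts ∧ r < (i : ℚ) := by
    rw [RightOf] at hR'
    push_neg at hR'
    obtain ⟨r, hrm, hrlt⟩ := hR'
    exact ⟨r, hrm, hrlt⟩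
  have hxT : x ∈ T.verts := by rw [hT]; simp
  have hyT : y ∈ T.verts := by rw [hT]; simp
  have hxT' : x ∈ T'.verts := by rw [hT']; simp
  have hyT' : y ∈ T'.verts := by rw [hT']; simp
  have hwr : w = some r := by
    rw [hT'] at hrm
    simp only [Finset.mem_insert, Finset.mem_singleton] at hrm
    rcases hrm with h' | h' | h'
    · exfalso; rw [← h'] at hxT; exact absurd (hR r hxT) (not_le.mpr hrlt)
    · exfalso; rw [← h'] at hyT; exact absurd (hR r hyT) (not_le.mpr hrlt)
    · exact h'.symm
  subst hwr
  have hwT' : (some r : FareyVertex) ∈ T'.verts := by rw [hT']; simp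
  have hxw : x ≠ some r := by
    intro h'; rw [h'] at hxT; exact absurd (hR r hxT) (not_le.mpr hrlt)
  have hyw : y ≠ some r := by
    intro h'; rw [h'] at hyT; exact absurd (hR r hyT) (not_le.mpr hrlt)
  have nxy : FareyNeighbor x y := T.neighbors x hxT y hyT hxy
  have nxw : FareyNeighbor x (some r) := T'.neighbors x hxT' _ hwT' hxw
  have nyw : FareyNeighbor y (some r) := T'.neighbors y hyT' _ hwT' hyw
  -- each of x, y is either ∞ or equal to i
  have hdicho : ∀ v : FareyVertex, v ∈ T.verts → v ∈ T'.verts → v ≠ some r →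
      FareyNeighbor v (some r) → v = none ∨ v = some ((i : ℤ) : ℚ) := by
    intro v hvT hvT' hvw nvw
    cases v with
    | none => exact Or.inl rfl
    | some s =>
      right
      have hs : (i : ℚ) ≤ s := hR s hvT
      rcases eq_or_lt_of_le hs with h' | h'
      · rw [h']
      · exact absurd (straddle i (neighbor_symm nvw) hrlt h') (by simp)
  have hx' := hdicho x hxT hxT' hxw nxw
  have hy' := hdicho y hyT hyT' hyw nyw
  -- exactly one of x, y is ∞
  have key : ∀ x' y' : FareyVertex, x' = none → y' = some ((i : ℤ) : ℚ) →
      T.verts = {x', y', t} → T'.verts = {x', y', some r} →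
      FareyNeighbor y' (some r) →
      T = stdTriangle i ∧ T' = stdTriangle (i - 1) := by
    intro x' y' hx0 hy0 hTv hTv' nyw'
    subst hx0; subst hy0
    -- w is an integer
    have hnT' : (none : FareyVertex) ∈ T'.verts := by rw [hTv']; simp
    have nwn : FareyNeighbor (some r) none :=
      T'.neighbors _ hwT' none hnT' (by simp)
    obtain ⟨m, rfl⟩ := neighbor_some_none nwn
    have hmi : m = i - 1 := by
      rcases neighbor_int_int (neighbor_symm nyw') with h' | h'
      · -- m = i + 1 : contradicts m < i
        exfalso
        have hmlt : (m : ℚ) < (i : ℚ) := hrlt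
        have : m < i := by exact_mod_cast hmlt
        omega
      · -- i = m + 1
        omega
    subst hmi
    -- T' is the standard triangle i - 1
    have hT'std : T' = stdTriangle (i - 1) := by
      apply FareyTriangle.ext
      rw [hTv', stdTriangle_verts]
      have : ((i - 1 : ℤ) + 1 : ℤ) = i := by ring
      rw [this]
      ext z
      simp only [Finset.mem_insert, Finset.mem_singleton]
      tauto
    -- t is an integer neighbor of i, not equal to i - 1
    have htT : t ∈ T.verts := by rw [hTv]; simp
    have hnT : (none : FareyVertex) ∈ T.verts := by rw [hTv]; simp
    have hiT : (some ((i:ℤ):ℚ) : FareyVertex) ∈ T.verts := by rw [hTv]; simp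
    have htn : t ≠ none := by
      intro h'; rw [h'] at htT'; exact htT' hnT'
    have hti : t ≠ some ((i:ℤ):ℚ) := by
      intro h'; rw [h'] at htT'
      exact htT' (by rw [hTv']; simp)
    obtain ⟨s, rfl⟩ : ∃ s : ℚ, t = some s := Option.ne_none_iff_exists'.mp htn
    obtain ⟨k, rfl⟩ := neighbor_some_none (T.neighbors _ htT none hnT (by simp))
    have hki : k = i + 1 := by
      rcases neighbor_int_int (T.neighbors _ htT _ hiT hti) with h' | h'
      · -- k = i + 1
        omega
      · -- i = k + 1, so k = i - 1, but then t ∈ T'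
        exfalso
        have : k = i - 1 := by omega
        subst this
        apply htT'
        rw [hTv']
        simp
      -- done
    subst hki
    have hTstd : T = stdTriangle i := by
      apply FareyTriangle.ext
      rw [hTv, stdTriangle_verts]
      ext z
      simp only [Finset.mem_insert, Finset.mem_singleton]
      tauto
    exact ⟨hTstd, hT'std⟩
  rcases hx' with hx0 | hxi
  · rcases hy' with hy0 | hyi
    · exfalso; rw [hx0, hy0] at hxy; exact hxy rfl
    · exact key x y hx0 hyi hT hT' nyw
  · rcases hy' with hy0 | hyi
    · refine key y x hy0 hxi ?_ ?_ nxw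
      · rw [hT]; ext z; simp only [Finset.mem_insert, Finset.mem_singleton]; tauto
      · rw [hT']; ext z; simp only [Finset.mem_insert, Finset.mem_singleton]; tauto
    · exfalso; rw [hxi, hyi] at hxy; exact hxy rfl


end Aux5b
section Aux5c

/-- Any walk crossing from the right of `i` to the left passes through `△⁽ⁱ⁾` and `△⁽ⁱ⁻¹⁾`. -/
lemma walk_cross {i : ℤ} {T T' : FareyTriangle} (W : fareyTree.Walk T T')
    (hR : RightOf i T) (hR' : ¬ RightOf i T') :
    stdTriangle i ∈ W.support ∧ stdTriangle (i - 1) ∈ W.support := by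
  induction W with
  | nil => exact absurd hR hR'
  | @cons u v c h W ih =>
    by_cases hRv : RightOf i v
    · obtain ⟨h1, h2⟩ := ih hRv hR'
      rw [SimpleGraph.Walk.support_cons]
      exact ⟨List.mem_cons_of_mem _ h1, List.mem_cons_of_mem _ h2⟩
    · obtain ⟨hTi, hTi'⟩ := adj_cross h hR hRv
      rw [SimpleGraph.Walk.support_cons]
      constructor
      · rw [← hTi]; exact List.mem_cons_self
      · rw [← hTi']; exact List.mem_cons_of_mem _ (SimpleGraph.Walk.start_mem_support W)

lemma not_rightOf_std0 {i : ℤ} (hi : 1 ≤ i) : ¬ RightOf i (stdTriangle 0) := by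
  intro h
  have h0 : (some ((0 : ℤ) : ℚ) : FareyVertex) ∈ (stdTriangle 0).verts := by
    rw [mem_stdTriangle_iff]; left; rfl
  have := h _ h0
  rw [Int.cast_zero] at this
  have : (i : ℚ) ≤ 0 := this
  have : i ≤ 0 := by exact_mod_cast this
  omega

lemma dist_std0 (n : ℕ) : fareyTree.dist (stdTriangle (n : ℤ)) (stdTriangle 0) = n := by
  induction n with
  | zero => simp [SimpleGraph.dist_self]
  | succ k ih =>
    have hub : fareyTree.dist (stdTriangle ((k+1 : ℕ) : ℤ)) (stdTriangle 0) ≤ k + 1 := by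
      obtain ⟨Wk, hWk⟩ := (reach_std (k : ℤ)).exists_walk_length_eq_dist
      have hcast : ((k+1 : ℕ) : ℤ) = (k : ℤ) + 1 := by push_cast; ring
      have hadj : fareyTree.Adj (stdTriangle ((k+1 : ℕ) : ℤ)) (stdTriangle (k : ℤ)) := by
        rw [hcast]; exact adj_std_succ k
      have := fareyTree.dist_le (SimpleGraph.Walk.cons hadj Wk)
      rw [SimpleGraph.Walk.length_cons, hWk, ih] at this
      omega
    have hlb : k + 1 ≤ fareyTree.dist (stdTriangle ((k+1 : ℕ) : ℤ)) (stdTriangle 0) := by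
      obtain ⟨W, hW⟩ := (reach_std ((k+1 : ℕ) : ℤ)).exists_walk_length_eq_dist
      have hR : RightOf ((k+1 : ℕ) : ℤ) (stdTriangle ((k+1 : ℕ) : ℤ)) := rightOf_std _
      have hR' : ¬ RightOf ((k+1 : ℕ) : ℤ) (stdTriangle 0) :=
        not_rightOf_std0 (by exact_mod_cast Nat.succ_le_succ (Nat.zero_le k))
      obtain ⟨-, hmem⟩ := walk_cross W hR hR'
      have hcast : ((k+1 : ℕ) : ℤ) - 1 = (k : ℤ) := by push_cast; ring
      rw [hcast] at hmem
      have hsplit := W.take_spec hmem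
      have hlen : (W.takeUntil _ hmem).length + (W.dropUntil _ hmem).length = W.length := by
        rw [← SimpleGraph.Walk.length_append, hsplit]
      have h1 : 1 ≤ (W.takeUntil _ hmem).length := by
        by_contra hc
        push_neg at hc
        have h0 : (W.takeUntil _ hmem).length = 0 := by omega
        have := SimpleGraph.Walk.eq_of_length_eq_zero h0
        have := std_injective this
        omega
      have h2 : k ≤ (W.dropUntil _ hmem).length := by
        have := fareyTree.dist_le (W.dropUntil _ hmem)
        rw [ih] at this
        exact this
      omega
    omega

/-- Main distance lemma: if `T` is right of `n ≥ 1` then the geodesic from `T` to `△⁽⁰⁾`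
passes through `△⁽ⁿ⁾`. -/
lemma dist_rightOf {n : ℕ} (hn : 1 ≤ n) {T : FareyTriangle} (hR : RightOf (n : ℤ) T) :
    fareyTree.dist T (stdTriangle 0) = fareyTree.dist T (stdTriangle (n : ℤ)) + n := by
  have hreach0 : fareyTree.Reachable T (stdTriangle 0) := reach_std0 T
  have hreachn : fareyTree.Reachable T (stdTriangle (n : ℤ)) :=
    hreach0.trans (reach_std (n : ℤ)).symm
  have hub : fareyTree.dist T (stdTriangle 0) ≤ fareyTree.dist T (stdTriangle (n : ℤ)) + n := by
    obtain ⟨W1, hW1⟩ := hreachn.exists_walk_length_eq_dist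
    obtain ⟨W2, hW2⟩ := (reach_std (n : ℤ)).exists_walk_length_eq_dist
    have := fareyTree.dist_le (W1.append W2)
    rw [SimpleGraph.Walk.length_append, hW1, hW2, dist_std0] at this
    exact this
  have hlb : fareyTree.dist T (stdTriangle (n : ℤ)) + n ≤ fareyTree.dist T (stdTriangle 0) := by
    obtain ⟨W, hW⟩ := hreach0.exists_walk_length_eq_dist
    have hR' : ¬ RightOf (n : ℤ) (stdTriangle 0) := not_rightOf_std0 (by exact_mod_cast hn)
    obtain ⟨hmem, -⟩ := walk_cross W hR hR'
    have hsplit := W.take_spec hmem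
    have hlen : (W.takeUntil _ hmem).length + (W.dropUntil _ hmem).length = W.length := by
      rw [← SimpleGraph.Walk.length_append, hsplit]
    have h1 : fareyTree.dist T (stdTriangle (n : ℤ)) ≤ (W.takeUntil _ hmem).length :=
      fareyTree.dist_le _
    have h2 : n ≤ (W.dropUntil _ hmem).length := by
      have := fareyTree.dist_le (W.dropUntil _ hmem)
      rw [dist_std0] at this
      exact this
    omega
  omega

end Aux5c
section Aux6

lemma pq_num_den {p q : ℕ} (hq : 1 ≤ q) (hpq : Nat.Coprime p q) :
    ((p : ℚ) / (q : ℚ)).num = (p : ℤ) ∧ ((p : ℚ) / (q : ℚ)).den = q := by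
  have h0 : ((p : ℚ) / (q : ℚ)) = Rat.mk' (p : ℤ) q (by omega) (by simpa using hpq) := by
    rw [Rat.mk_eq_divInt, Rat.divInt_eq_div]
    norm_num
  rw [h0]
  exact ⟨rfl, rfl⟩

/-- A finite Farey-neighbor of `p/q` is at least `z = min ⌊p/q⌋ 3`. -/
lemma nbr {p q z : ℕ} (hq : 1 ≤ q) (hpq : Nat.Coprime p q)
    (hns : (p : ℚ) / (q : ℚ) ∉ ({1, 2, 3, 4} : Set ℚ))
    (hz1 : 1 ≤ z) (hzle : z ≤ p / q) (hz3 : z ≤ 3)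
    {r : ℚ} (hn : FareyNeighbor (some r) (some ((p : ℚ) / (q : ℚ)))) :
    ((z : ℤ) : ℚ) ≤ r := by
  obtain ⟨hnum, hden⟩ := pq_num_den hq hpq
  unfold FareyNeighbor at hn
  have hfd : fden (some ((p : ℚ) / (q : ℚ))) = (q : ℤ) := by
    show ((((p : ℚ) / (q : ℚ)).den : ℕ) : ℤ) = (q : ℤ)
    rw [hden]
  have hfn : fnum (some ((p : ℚ) / (q : ℚ))) = (p : ℤ) := hnum
  rw [hfd, hfn] at hn
  -- hn : |fnum (some r) * q - fden (some r) * p| = 1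
  have hn' : |r.num * (q : ℤ) - (r.den : ℤ) * (p : ℤ)| = 1 := hn
  rw [int_le_rat_iff]
  have hb : (1 : ℤ) ≤ (r.den : ℤ) := by exact_mod_cast r.pos
  have hQ : (1 : ℤ) ≤ (q : ℤ) := by exact_mod_cast hq
  have hZq : (z : ℤ) * (q : ℤ) + 1 ≤ (p : ℤ) := by
    have h1 : z * q ≤ p := (Nat.le_div_iff_mul_le (by omega)).mp hzle
    have h2 : z * q ≠ p := by
      intro h'
      have hdvd : q ∣ p := ⟨z, by rw [← h', Nat.mul_comm]⟩
      have hq1 : q = 1 := Nat.Coprime.eq_one_of_dvd hpq.symm hdvd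
      subst hq1
      apply hns
      have hpz : p = z := by omega
      subst hpz
      simp only [Nat.cast_one, div_one]
      interval_cases p <;> norm_num
    have h3 : z * q + 1 ≤ p := Nat.succ_le_of_lt (Nat.lt_of_le_of_ne h1 h2)
    exact_mod_cast h3
  rcases (abs_eq (by norm_num : (0:ℤ) ≤ 1)).mp hn' with h' | h'
  · by_contra hc
    push_neg at hc
    have hc' : r.num ≤ (z : ℤ) * (r.den : ℤ) - 1 := by omega
    have e1 : r.num * (q : ℤ) ≤ ((z : ℤ) * (r.den : ℤ) - 1) * (q : ℤ) :=
      mul_le_mul_of_nonneg_right hc' (by omega)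
    have e2 : (r.den : ℤ) * ((z : ℤ) * (q : ℤ) + 1) ≤ (r.den : ℤ) * (p : ℤ) :=
      mul_le_mul_of_nonneg_left hZq (by omega)
    nlinarith
  · by_contra hc
    push_neg at hc
    have hc' : r.num ≤ (z : ℤ) * (r.den : ℤ) - 1 := by omega
    have e1 : r.num * (q : ℤ) ≤ ((z : ℤ) * (r.den : ℤ) - 1) * (q : ℤ) :=
      mul_le_mul_of_nonneg_right hc' (by omega)
    have e2 : (r.den : ℤ) * ((z : ℤ) * (q : ℤ) + 1) ≤ (r.den : ℤ) * (p : ℤ) :=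
      mul_le_mul_of_nonneg_left hZq (by omega)
    nlinarith

/-- The triangle `△_V` lies to the right of `z`. -/
lemma tv_rightOf {p q : ℕ} (hp : 1 ≤ p) (hq : 1 ≤ q) (hpq : Nat.Coprime p q)
    (hns : (p : ℚ) / (q : ℚ) ∉ ({1, 2, 3, 4} : Set ℚ))
    {Tm TV : FareyTriangle} (hTm : some ((p : ℚ) / (q : ℚ)) ∈ Tm.verts)
    (hadj : fareyTree.Adj Tm TV) (hTV : some ((p : ℚ) / (q : ℚ)) ∉ TV.verts)
    {z : ℕ} (hz1 : 1 ≤ z) (hzle : z ≤ p / q) (hz3 : z ≤ 3) :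
    RightOf (z : ℤ) TV := by
  obtain ⟨x, y, t, w, hxy, htT', hwT, hT, hT'⟩ := adj_struct hadj
  have hxTV : x ∈ TV.verts := by rw [hT']; simp
  have hyTV : y ∈ TV.verts := by rw [hT']; simp
  have hwTV : w ∈ TV.verts := by rw [hT']; simp
  have hxTm : x ∈ Tm.verts := by rw [hT]; simp
  have hyTm : y ∈ Tm.verts := by rw [hT]; simp
  have hPt : t = some ((p : ℚ) / (q : ℚ)) := by
    have hmem := hTm
    rw [hT] at hmem
    simp only [Finset.mem_insert, Finset.mem_singleton] at hmem
    rcases hmem with h' | h' | h'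
    · exfalso; rw [← h'] at hxTV; exact hTV hxTV
    · exfalso; rw [← h'] at hyTV; exact hTV hyTV
    · exact h'.symm
  subst hPt
  set P : FareyVertex := some ((p : ℚ) / (q : ℚ)) with hPdef
  have hPTm : P ∈ Tm.verts := hTm
  have hxP : x ≠ P := fun h' => hTV (h' ▸ hxTV)
  have hyP : y ≠ P := fun h' => hTV (h' ▸ hyTV)
  have hwP : w ≠ P := fun h' => hTV (h' ▸ hwTV)
  have nxP : FareyNeighbor x P := Tm.neighbors x hxTm P hPTm hxP
  have nyP : FareyNeighbor y P := Tm.neighbors y hyTm P hPTm hyP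
  have hxw : x ≠ w := fun h' => hwT (h' ▸ hxTm)
  have hyw : y ≠ w := fun h' => hwT (h' ▸ hyTm)
  have nxw : FareyNeighbor x w := TV.neighbors x hxTV w hwTV hxw
  have nyw : FareyNeighbor y w := TV.neighbors y hyTV w hwTV hyw
  have nxy : FareyNeighbor x y := Tm.neighbors x hxTm y hyTm hxy
  have hfin : ∀ v : FareyVertex, FareyNeighbor v P → ∀ s : ℚ, v = some s → ((z:ℤ):ℚ) ≤ s := by
    intro v hv s hs
    subst hs
    exact nbr hq hpq hns hz1 hzle hz3 hv
  -- the case where one of the shared vertices is ∞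
  have hinf : ∀ x' y' : FareyVertex, x' = none → x' ≠ y' →
      FareyNeighbor y' x' → FareyNeighbor x' P → FareyNeighbor y' P →
      FareyNeighbor x' w → FareyNeighbor y' w → ∀ s : ℚ, w = some s → ((z:ℤ):ℚ) ≤ s := by
    intro x' y' h0 hxy' nyx' nxP' nyP' nxw' nyw' s hws
    subst h0
    subst hws
    -- q = 1
    have hq1 : q = 1 := by
      have hfd : fden P = (q : ℤ) := by
        show ((((p : ℚ) / (q : ℚ)).den : ℕ) : ℤ) = (q : ℤ)
        rw [(pq_num_den hq hpq).2]
      unfold FareyNeighbor at nxP'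
      have h1 : |1 * fden P - 0 * fnum P| = 1 := nxP'
      rw [hfd] at h1
      simp only [one_mul, zero_mul, sub_zero] at h1
      have h2 : ((q:ℕ):ℤ) = 1 := by
        rwa [abs_of_nonneg (by positivity)] at h1
      exact_mod_cast h2
    -- p ≥ 5
    have hp5 : 5 ≤ p := by
      by_contra hc
      push_neg at hc
      apply hns
      subst hq1
      simp only [Nat.cast_one, div_one]
      interval_cases p <;> norm_num
    -- y' is an integer
    have hy'0 : y' ≠ none := fun h' => hxy' h'.symm
    obtain ⟨ry, rfl⟩ : ∃ ry : ℚ, y' = some ry := Option.ne_none_iff_exists'.mp hy'0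
    obtain ⟨m, rfl⟩ := neighbor_some_none nyx'
    -- the vertex w is an integer
    obtain ⟨nw, rfl⟩ := neighbor_some_none (neighbor_symm nxw')
    -- P is the integer p
    have hPint : P = some (((p:ℕ):ℤ) : ℚ) := by
      rw [hPdef]
      congr 1
      subst hq1
      push_cast
      ring
    rw [hPint] at nyP'
    have hm : m = ((p:ℕ):ℤ) + 1 ∨ ((p:ℕ):ℤ) = m + 1 := neighbor_int_int nyP'
    have hnwm : m = nw + 1 ∨ nw = m + 1 := neighbor_int_int nyw'
    have hnwp : nw ≠ ((p:ℕ):ℤ) := by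
      intro h'
      apply hwP
      rw [hPint, h']
    have hzn : ((z:ℕ):ℤ) ≤ nw := by
      have hz3' : ((z:ℕ):ℤ) ≤ 3 := by exact_mod_cast hz3
      have hp5' : (5:ℤ) ≤ ((p:ℕ):ℤ) := by exact_mod_cast hp5
      omega
    exact_mod_cast hzn
  intro r hr
  rw [hT'] at hr
  simp only [Finset.mem_insert, Finset.mem_singleton] at hr
  rcases hr with h' | h' | h'
  · exact hfin x nxP r h'.symm
  · exact hfin y nyP r h'.symm
  · have hw : w = some r := h'.symm
    cases hx0 : x with
    | none =>
      rw [hx0] at hxy nxy nxP nxw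
      exact hinf none y rfl hxy (neighbor_symm nxy) nxP nyP nxw nyw r hw
    | some rx =>
      cases hy0 : y with
      | none =>
        rw [hy0] at hxy nxy nyP nyw
        exact hinf none x rfl (Ne.symm hxy) nxy nyP nxP nyw nxw r hw
      | some ry =>
        rw [hx0] at nxP nxw
        rw [hy0] at nyP nyw
        have hzx : ((z:ℤ):ℚ) ≤ rx := hfin _ nxP rx rfl
        have hzy : ((z:ℤ):ℚ) ≤ ry := hfin _ nyP ry rfl
        rw [hw] at nxw nyw
        by_contra hc
        push_neg at hc
        rcases eq_or_lt_of_le hzx with h1 | h1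
        · rcases eq_or_lt_of_le hzy with h2 | h2
          · exfalso
            rw [hx0, hy0] at hxy
            exact hxy (by rw [← h1, ← h2])
          · exact straddle (z:ℤ) (neighbor_symm nyw) hc h2
        · exact straddle (z:ℤ) (neighbor_symm nxw) hc h1

end Aux6
theorem dist_triangle_V_to_stdTriangle_z (p q : ℕ) (hp : 1 ≤ p) (hq : 1 ≤ q)
    (hpq : Nat.Coprime p q) (hns : (p : ℚ) / (q : ℚ) ∉ ({1, 2, 3, 4} : Set ℚ))
    (Tm : FareyTriangle) (hTm : some ((p : ℚ) / (q : ℚ)) ∈ Tm.verts)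
    (hmin : ∀ T' : FareyTriangle, some ((p : ℚ) / (q : ℚ)) ∈ T'.verts →
      fareyTree.dist Tm (stdTriangle 0) ≤ fareyTree.dist T' (stdTriangle 0))
    (TV : FareyTriangle) (hadj : fareyTree.Adj Tm TV)
    (hTV : some ((p : ℚ) / (q : ℚ)) ∉ TV.verts) :
    (fareyTree.dist TV (stdTriangle ((min (p / q) 3 : ℕ) : ℤ)) : ℤ) =
        (fareyTree.dist TV (stdTriangle 0) : ℤ) -
          (fareyTree.dist (stdTriangle ((min (p / q) 3 : ℕ) : ℤ)) (stdTriangle 0) : ℤ) ∧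
    (fareyTree.dist TV (stdTriangle ((min (p / q) 3 : ℕ) : ℤ)) : ℤ) =
        (fareyTree.dist TV (stdTriangle 0) : ℤ) - ((min (p / q) 3 : ℕ) : ℤ) := by
  rcases Nat.eq_zero_or_pos (min (p / q) 3) with hz0 | hz1
  · rw [hz0]
    norm_num
  · have hzle : min (p / q) 3 ≤ p / q := min_le_left _ _
    have hz3 : min (p / q) 3 ≤ 3 := min_le_right _ _
    have hR : RightOf ((min (p / q) 3 : ℕ) : ℤ) TV :=
      tv_rightOf hp hq hpq hns hTm hadj hTV hz1 hzle hz3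
    have h1 := dist_rightOf hz1 hR
    have h2 := dist_std0 (min (p / q) 3)
    constructor
    · rw [h1, h2]
      push_cast
      ring
    · rw [h1]
      push_cast
      ring
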